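/- Let Λ be a subring of ℝ, let U be a free Λ-module of finite rank g ≥ 1 with dual basis of linear forms y₁, …, y_g ∈ U* := Hom_Λ(U, Λ), and let x₁, …, x_m ∈ U* be linear forms such that d · y₁(u)·y₁(v) = Σ_{j=1}^{m} x_j(u)·x_j(v) for all u, v ∈ U, for some d ∈ Λ. Then each x_j is a scalar multiple of y₁, i.e., there exist a_j ∈ Λ with x_j = a_j · y₁ for all j. -/

import Mathlib

set_option synthInstance.maxHeartbeats 1000000
set_option maxHeartbeats 1000000

/-- Over a subring `Λ ⊆ ℝ`, if `U` is a free `Λ`-module of finite rank `g`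
with a basis `y₁,…,y_g` of the dual module, and linear forms `x₁,…,x_m` satisfy
`d·y₁(u)·y₁(v) = Σ_j x_j(u)·x_j(v)` for all `u, v`, then each `x_j` is a scalar
multiple of `y₁`. -/
theorem stmt_3 (Λ : Subring ℝ) (U : Type*) [AddCommGroup U] [Module Λ U]
    [Module.Free Λ U] [Module.Finite Λ U]
    (g m : ℕ) (hg : 0 < g)
    (y : Module.Basis (Fin g) Λ (Module.Dual Λ U))
    (x : Fin m → Module.Dual Λ U) (d : Λ)
    (h : ∀ u v : U, d * (y ⟨0, hg⟩ u * y ⟨0, hg⟩ v) = ∑ j : Fin m, x j u * x j v) :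
    ∀ j : Fin m, ∃ a : Λ, x j = a • y ⟨0, hg⟩ := by
  classical
  -- pre-dual basis elements in U
  set i0 : Fin g := ⟨0, hg⟩ with hi0
  let u : Fin g → U := fun s => (Module.evalEquiv Λ U).symm (y.dualBasis s)
  have hyu : ∀ t s : Fin g, y t (u s) = if t = s then 1 else 0 := by
    intro t s
    show y t ((Module.evalEquiv Λ U).symm (y.dualBasis s)) = _
    rw [Module.apply_evalEquiv_symm_apply, Module.Basis.dualBasis_apply_self]
  have hrepr : ∀ (f : Module.Dual Λ U) (s : Fin g), y.repr f s = f (u s) := by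
    intro f s
    have := Module.apply_evalEquiv_symm_apply (R := Λ) (M := U) f (y.dualBasis s)
    rw [this, Module.Basis.coe_dualBasis]
    rfl
  -- evaluating at u s for s ≠ i0 kills all x j
  have hzero : ∀ (j : Fin m) (s : Fin g), s ≠ i0 → x j (u s) = 0 := by
    intro j s hs
    have h0 : (0 : Λ) = ∑ k : Fin m, x k (u s) * x k (u s) := by
      have := h (u s) (u s)
      rwa [hyu i0 s, if_neg (Ne.symm hs), mul_zero, mul_zero] at this
    have hR : (0 : ℝ) = ∑ k : Fin m, ((x k (u s) : ℝ)) ^ 2 := by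
      have := congrArg (Subring.subtype Λ) h0
      simpa [sq, Finset.mul_sum] using this
    have hall : ∀ k ∈ Finset.univ, ((x k (u s) : ℝ)) ^ 2 = 0 :=
      (Finset.sum_eq_zero_iff_of_nonneg
        (fun k _ => sq_nonneg ((x k (u s) : ℝ)))).mp hR.symm
    have : ((x j (u s) : ℝ)) = 0 := by
      have := hall j (Finset.mem_univ j)
      exact pow_eq_zero_iff (n := 2) (by norm_num) |>.mp this
    exact Subtype.ext this
  intro j
  refine ⟨x j (u i0), ?_⟩
  conv_lhs => rw [← y.sum_repr (x j)]
  rw [Finset.sum_eq_single i0]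
  · rw [hrepr]
  · intro s _ hs
    rw [hrepr, hzero j s hs]
    exact zero_smul (↥Λ) (y s)
  · intro hs
    exact absurd (Finset.mem_univ i0) hs
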